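/- Let n = 2k+1 and let f, g : Z_2^n → Z_2 be the semi-bent functions f(x,y) = (0,π(x))·y and g(x,y) = (1,σ(x))·y on Z_2^k × Z_2^{k+1}, where π and σ are permutations of Z_2^k. Then f and g are disjoint spectra: W_f(ω)·W_g(ω) = 0 for every ω ∈ Z_2^n. -/
import Mathlib

open Finset

def dotp {k : ℕ} (a b : Fin k → ZMod 2) : ZMod 2 := ∑ i, a i * b i

def walsh {n : ℕ} (f : (Fin n → ZMod 2) → ZMod 2) (ω : Fin n → ZMod 2) : ℤ :=
  ∑ x : Fin n → ZMod 2, (-1 : ℤ) ^ (f x + dotp ω x).val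

def walsh2 {k m : ℕ} (f : (Fin k → ZMod 2) → (Fin m → ZMod 2) → ZMod 2)
    (ω₁ : Fin k → ZMod 2) (ω₂ : Fin m → ZMod 2) : ℤ :=
  ∑ x : Fin k → ZMod 2, ∑ y : Fin m → ZMod 2,
    (-1 : ℤ) ^ (f x y + dotp ω₁ x + dotp ω₂ y).val

lemma pow_val_add (a b : ZMod 2) : (-1 : ℤ) ^ (a + b).val = (-1) ^ a.val * (-1) ^ b.val := by
  revert a b; decide

lemma dotp_add_left {n : ℕ} (a b y : Fin n → ZMod 2) :
    dotp (a + b) y = dotp a y + dotp b y := by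
  simp [dotp, add_mul, Finset.sum_add_distrib]

lemma dotp_single {n : ℕ} (d : Fin n → ZMod 2) (i : Fin n) :
    dotp d (Pi.single i 1) = d i := by
  simp [dotp, Pi.single_apply, mul_ite]

lemma sum_pow_dotp {n : ℕ} (d : Fin n → ZMod 2) (hd : d ≠ 0) :
    ∑ y : Fin n → ZMod 2, (-1 : ℤ) ^ (dotp d y).val = 0 := by
  obtain ⟨i, hi⟩ := Function.ne_iff.mp hd
  have h1 : d i = 1 := by
    have : ∀ a : ZMod 2, a ≠ 0 → a = 1 := by decide
    exact this _ hi
  have hre : ∑ y : Fin n → ZMod 2, (-1 : ℤ) ^ (dotp d y).val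
      = ∑ y : Fin n → ZMod 2, (-1 : ℤ) ^ (dotp d (y + Pi.single i 1)).val :=
    (Fintype.sum_equiv (Equiv.addRight (Pi.single i 1)) _ _ (fun y => rfl)).symm
  have : ∀ y : Fin n → ZMod 2,
      (-1 : ℤ) ^ (dotp d (y + Pi.single i 1)).val = -((-1) ^ (dotp d y).val) := by
    intro y
    have : dotp d (y + Pi.single i 1) = dotp d y + 1 := by
      have := dotp_add_left d d y  -- dummy
      rw [show dotp d (y + Pi.single i 1) = dotp d y + dotp d (Pi.single i 1) by
        simp [dotp, mul_add, Finset.sum_add_distrib], dotp_single, h1]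
    rw [this]
    have : ∀ a : ZMod 2, (-1 : ℤ) ^ (a + 1).val = -((-1) ^ a.val) := by decide
    exact this _
  have h2 : (∑ y : Fin n → ZMod 2, (-1 : ℤ) ^ (dotp d y).val)
      = -∑ y : Fin n → ZMod 2, (-1 : ℤ) ^ (dotp d y).val := by
    conv_lhs => rw [hre]
    simp only [this, Finset.sum_neg_distrib]
  linarith

lemma walsh2_zero (k : ℕ) (p : Equiv.Perm (Fin k → ZMod 2)) (j : ZMod 2)
    (ω₁ : Fin k → ZMod 2) (ω₂ : Fin (k + 1) → ZMod 2) (h : j + ω₂ 0 ≠ 0) :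
    walsh2 (fun x y => dotp (Fin.cons j (p x)) y) ω₁ ω₂ = 0 := by
  unfold walsh2
  apply Finset.sum_eq_zero
  intro x _
  have hrw : ∀ y : Fin (k + 1) → ZMod 2,
      (dotp (Fin.cons j (p x)) y + dotp ω₁ x + dotp ω₂ y)
      = dotp ω₁ x + dotp (Fin.cons j (p x) + ω₂) y := by
    intro y; rw [dotp_add_left]; ring
  simp only [hrw, pow_val_add]
  rw [← Finset.mul_sum, sum_pow_dotp, mul_zero]
  intro hc
  apply h
  have := congrFun hc 0
  simpa using this

theorem stmt18 (k : ℕ) (π σ : Equiv.Perm (Fin k → ZMod 2))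
    (ω₁ : Fin k → ZMod 2) (ω₂ : Fin (k + 1) → ZMod 2) :
    walsh2 (fun x y => dotp (Fin.cons (0 : ZMod 2) (π x)) y) ω₁ ω₂ *
      walsh2 (fun x y => dotp (Fin.cons (1 : ZMod 2) (σ x)) y) ω₁ ω₂ = 0 := by
  have hcase : ω₂ 0 = 0 ∨ ω₂ 0 = 1 := by
    have : ∀ a : ZMod 2, a = 0 ∨ a = 1 := by decide
    exact this _
  rcases hcase with h | h
  · rw [walsh2_zero k σ 1 ω₁ ω₂ (by rw [h]; decide), mul_zero]
  · rw [walsh2_zero k π 0 ω₁ ω₂ (by rw [h]; decide), zero_mul]
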